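/- Let n ≥ 1 and let S ⊆ M(n,ℂ) be a unital ℂ-subalgebra. Suppose there exist nonzero vectors u, v ∈ ℂ^n such that the rank-one matrix u vᵀ belongs to S, the set {N u : N ∈ S} spans ℂ^n, and the set {Nᵀ v : N ∈ S} spans ℂ^n. Then S = M(n,ℂ). -/
import Mathlib

private lemma vmv_add_left {n : ℕ} (a c b : Fin n → ℂ) :
    Matrix.vecMulVec (a + c) b = Matrix.vecMulVec a b + Matrix.vecMulVec c b := by
  ext i j; simp [Matrix.vecMulVec]; ring

private lemma vmv_smul_left {n : ℕ} (r : ℂ) (a b : Fin n → ℂ) :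
    Matrix.vecMulVec (r • a) b = r • Matrix.vecMulVec a b := by
  ext i j; simp [Matrix.vecMulVec]; ring

private lemma vmv_zero_left {n : ℕ} (b : Fin n → ℂ) :
    Matrix.vecMulVec (0 : Fin n → ℂ) b = 0 := by
  ext i j; simp [Matrix.vecMulVec]

private lemma vmv_add_right {n : ℕ} (a b c : Fin n → ℂ) :
    Matrix.vecMulVec a (b + c) = Matrix.vecMulVec a b + Matrix.vecMulVec a c := by
  ext i j; simp [Matrix.vecMulVec]; ring

private lemma vmv_smul_right {n : ℕ} (r : ℂ) (a b : Fin n → ℂ) :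
    Matrix.vecMulVec a (r • b) = r • Matrix.vecMulVec a b := by
  ext i j; simp [Matrix.vecMulVec]; ring

private lemma vmv_zero_right {n : ℕ} (a : Fin n → ℂ) :
    Matrix.vecMulVec a (0 : Fin n → ℂ) = 0 := by
  ext i j; simp [Matrix.vecMulVec]

/-- Let `S` be a unital `ℂ`-subalgebra of `M(n,ℂ)`.  If there are nonzero vectors
`u, v ∈ ℂⁿ` such that the rank-one matrix `u vᵀ` lies in `S`, the set `{N u : N ∈ S}`
spans `ℂⁿ`, and the set `{Nᵀ v : N ∈ S}` spans `ℂⁿ`, then `S = M(n,ℂ)`. -/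
theorem subalgebra_eq_top_of_rank_one (n : ℕ) (hn : 1 ≤ n)
    (S : Subalgebra ℂ (Matrix (Fin n) (Fin n) ℂ)) (u v : Fin n → ℂ)
    (hu : u ≠ 0) (hv : v ≠ 0)
    (huv : Matrix.vecMulVec u v ∈ S)
    (hspan₁ : Submodule.span ℂ {w : Fin n → ℂ | ∃ N ∈ S, w = N.mulVec u} = ⊤)
    (hspan₂ : Submodule.span ℂ {w : Fin n → ℂ | ∃ N ∈ S, w = N.transpose.mulVec v} = ⊤) :
    S = ⊤ := by
  have key : ∀ a ∈ Submodule.span ℂ {w : Fin n → ℂ | ∃ N ∈ S, w = N.mulVec u},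
      ∀ b ∈ Submodule.span ℂ {w : Fin n → ℂ | ∃ N ∈ S, w = N.transpose.mulVec v},
      Matrix.vecMulVec a b ∈ S := by
    intro a ha
    induction ha using Submodule.span_induction with
    | mem a ha =>
      obtain ⟨N, hN, rfl⟩ := ha
      intro b hb
      induction hb using Submodule.span_induction with
      | mem b hb =>
        obtain ⟨M, hM, rfl⟩ := hb
        have : Matrix.vecMulVec (N.mulVec u) (M.transpose.mulVec v)
            = N * Matrix.vecMulVec u v * M := by
          ext i k
          simp [Matrix.vecMulVec, Matrix.mul_apply, Matrix.mulVec, dotProduct,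
            Finset.sum_mul, Finset.mul_sum]
          apply Finset.sum_congr rfl
          intro j _
          apply Finset.sum_congr rfl
          intro l _
          ring
        rw [this]
        exact S.mul_mem (S.mul_mem hN huv) hM
      | zero => rw [vmv_zero_right]; exact S.zero_mem
      | add b c _ _ hb hc => rw [vmv_add_right]; exact S.add_mem hb hc
      | smul c b _ hb => rw [vmv_smul_right]; exact S.smul_mem hb c
    | zero => intro b hb; rw [vmv_zero_left]; exact S.zero_mem
    | add a c _ _ ha hc => intro b hb; rw [vmv_add_left]; exact S.add_mem (ha b hb) (hc b hb)
    | smul c a _ ha => intro b hb; rw [vmv_smul_left]; exact S.smul_mem (ha b hb) c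
  have key' : ∀ a b : Fin n → ℂ, Matrix.vecMulVec a b ∈ S := by
    intro a b
    exact key a (hspan₁ ▸ Submodule.mem_top) b (hspan₂ ▸ Submodule.mem_top)
  rw [eq_top_iff]
  intro A _
  have : A = ∑ i : Fin n, ∑ j : Fin n, A i j • Matrix.vecMulVec (Pi.single i 1) (Pi.single j 1) := by
    ext i' j'
    simp [Matrix.sum_apply, Matrix.smul_apply, Matrix.vecMulVec, Pi.single_apply]
  rw [this]
  exact S.toSubmodule.sum_mem fun i _ => S.toSubmodule.sum_mem fun j _ =>
    S.toSubmodule.smul_mem _ (key' _ _)
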